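/- Let γ ∈ (0,1], α = 1/√5, and η = (2γ + 5 + √(25 − 16γ²))/(10(1+γ)). For the 2p×2p matrix M_p = (1/5)·[[(γ+5)·Id_p, 2γ·Id_p], [−2γ·Id_p, γ·Id_p]], one has rank(M_p − (1+γ)η·Id_{2p}) = rank((M_p − (1+γ)η·Id_{2p})²) = p; in particular η is a semi-simple eigenvalue of (1/(1+γ))·M_p. -/

import Mathlib

open Matrix

private lemma rank_smul_ne_zero {n : Type*} [Fintype n] [DecidableEq n] {k : ℝ} (hk : k ≠ 0)
    (A : Matrix n n ℝ) : (k • A).rank = A.rank := by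
  have h : k • A = (k • (1 : Matrix n n ℝ)) * A := by rw [Matrix.smul_mul, one_mul]
  rw [h, Matrix.rank_mul_eq_right_of_isUnit_det]
  simp [Matrix.det_smul, isUnit_iff_ne_zero, hk]

private lemma rank_block_scalar (p : ℕ) (a b c d : ℝ) (ha : a ≠ 0) (hb : b ≠ 0)
    (hd : a * d = b * c) (A : Matrix (Fin p ⊕ Fin p) (Fin p ⊕ Fin p) ℝ)
    (hA : A = Matrix.fromBlocks (a • (1 : Matrix (Fin p) (Fin p) ℝ)) (b • 1) (c • 1) (d • 1)) :
    A.rank = p := by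
  have hmul : ∀ x y : ℝ, (x • (1 : Matrix (Fin p) (Fin p) ℝ)) * (y • 1) = (x * y) • 1 := by
    intro x y
    rw [Matrix.smul_mul, Matrix.mul_smul, Matrix.one_mul, smul_smul]
  apply le_antisymm
  · -- upper bound: A factors through Fin p
    have hba : a * (b / a) = b := by field_simp
    have hca : c * (b / a) = d := by
      field_simp
      linear_combination -hd
    have hfac : A = (Matrix.fromRows (a • (1 : Matrix (Fin p) (Fin p) ℝ)) (c • 1)) *
        (Matrix.fromCols (1 : Matrix (Fin p) (Fin p) ℝ) ((b / a) • 1)) := by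
      rw [Matrix.fromRows_mul_fromCols, hA, Matrix.mul_one, Matrix.mul_one, hmul, hmul,
        hba, hca]
    rw [hfac]
    calc ((Matrix.fromRows (a • (1 : Matrix (Fin p) (Fin p) ℝ)) (c • 1)) *
        (Matrix.fromCols (1 : Matrix (Fin p) (Fin p) ℝ) ((b / a) • 1))).rank
        ≤ (Matrix.fromCols (1 : Matrix (Fin p) (Fin p) ℝ) ((b / a) • 1)).rank :=
          Matrix.rank_mul_le_right _ _
      _ ≤ Fintype.card (Fin p) := Matrix.rank_le_card_height _
      _ = p := Fintype.card_fin p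
  · -- lower bound: b • 1 is obtained from A by multiplication
    have hbl : ((Matrix.fromCols (1 : Matrix (Fin p) (Fin p) ℝ) (0 : Matrix (Fin p) (Fin p) ℝ)) * A) *
        (Matrix.fromRows (0 : Matrix (Fin p) (Fin p) ℝ) (1 : Matrix (Fin p) (Fin p) ℝ)) =
        b • (1 : Matrix (Fin p) (Fin p) ℝ) := by
      rw [hA, Matrix.fromCols_mul_fromBlocks, Matrix.fromCols_mul_fromRows]
      simp
    have h1 : (b • (1 : Matrix (Fin p) (Fin p) ℝ)).rank = p := by
      rw [rank_smul_ne_zero hb, Matrix.rank_one, Fintype.card_fin]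
    calc p = (b • (1 : Matrix (Fin p) (Fin p) ℝ)).rank := h1.symm
      _ = (((Matrix.fromCols (1 : Matrix (Fin p) (Fin p) ℝ) (0 : Matrix (Fin p) (Fin p) ℝ)) * A) *
        (Matrix.fromRows (0 : Matrix (Fin p) (Fin p) ℝ) (1 : Matrix (Fin p) (Fin p) ℝ))).rank := by rw [hbl]
      _ ≤ ((Matrix.fromCols (1 : Matrix (Fin p) (Fin p) ℝ) (0 : Matrix (Fin p) (Fin p) ℝ)) * A).rank :=
          Matrix.rank_mul_le_left _ _
      _ ≤ A.rank := Matrix.rank_mul_le_right _ _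

theorem stmt11 (p : ℕ) (hp : 1 ≤ p) (γ : ℝ) (hγ0 : 0 < γ) (hγ1 : γ ≤ 1)
    (η : ℝ) (hη : η = (2 * γ + 5 + Real.sqrt (25 - 16 * γ ^ 2)) / (10 * (1 + γ)))
    (Mp : Matrix (Fin p ⊕ Fin p) (Fin p ⊕ Fin p) ℝ)
    (hMp : Mp = (1 / 5 : ℝ) •
      Matrix.fromBlocks ((γ + 5) • (1 : Matrix (Fin p) (Fin p) ℝ))
        ((2 * γ) • (1 : Matrix (Fin p) (Fin p) ℝ))
        ((-(2 * γ)) • (1 : Matrix (Fin p) (Fin p) ℝ))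
        (γ • (1 : Matrix (Fin p) (Fin p) ℝ))) :
    (Mp - ((1 + γ) * η) • (1 : Matrix (Fin p ⊕ Fin p) (Fin p ⊕ Fin p) ℝ)).rank = p ∧
    ((Mp - ((1 + γ) * η) • (1 : Matrix (Fin p ⊕ Fin p) (Fin p ⊕ Fin p) ℝ)) ^ 2).rank = p ∧
    ((1 / (1 + γ)) • Mp - η • (1 : Matrix (Fin p ⊕ Fin p) (Fin p ⊕ Fin p) ℝ)).rank =
      (((1 / (1 + γ)) • Mp - η • (1 : Matrix (Fin p ⊕ Fin p) (Fin p ⊕ Fin p) ℝ)) ^ 2).rank := by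
  have hγ1' : (0:ℝ) < 1 + γ := by linarith
  set s := Real.sqrt (25 - 16 * γ ^ 2) with hs
  have hDnn : (0:ℝ) ≤ 25 - 16 * γ ^ 2 := by nlinarith
  have hs2 : s ^ 2 = 25 - 16 * γ ^ 2 := Real.sq_sqrt hDnn
  have hs0 : 0 < s := Real.sqrt_pos.mpr (by nlinarith)
  have hs5 : s < 5 := by nlinarith
  have hlam : (1 + γ) * η = (2 * γ + 5 + s) / 10 := by
    rw [hη]; field_simp
  set a : ℝ := (5 - s) / 10 with ha_def
  set b : ℝ := 2 * γ / 5 with hb_def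
  set c : ℝ := -(2 * γ) / 5 with hc_def
  set d : ℝ := -(5 + s) / 10 with hd_def
  have ha : a ≠ 0 := by rw [ha_def]; intro h; nlinarith
  have hb : b ≠ 0 := by rw [hb_def]; positivity
  have hadbc : a * d = b * c := by
    rw [ha_def, hd_def, hb_def, hc_def]; nlinarith [hs2]
  have htne : a + d ≠ 0 := by rw [ha_def, hd_def]; intro h; nlinarith
  -- the matrix identity
  have hA : Mp - ((1 + γ) * η) • (1 : Matrix (Fin p ⊕ Fin p) (Fin p ⊕ Fin p) ℝ) =
      Matrix.fromBlocks (a • (1 : Matrix (Fin p) (Fin p) ℝ)) (b • 1) (c • 1) (d • 1) := by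
    rw [hMp, hlam]
    ext (i | i) (j | j) <;>
      simp [Matrix.one_apply, Matrix.smul_apply, Matrix.sub_apply,
        ha_def, hb_def, hc_def, hd_def] <;>
      split_ifs <;> ring
  have hr1 : (Mp - ((1 + γ) * η) • (1 : Matrix (Fin p ⊕ Fin p) (Fin p ⊕ Fin p) ℝ)).rank = p := by
    exact rank_block_scalar p a b c d ha hb hadbc _ hA
  -- the square
  have hsq : (Mp - ((1 + γ) * η) • (1 : Matrix (Fin p ⊕ Fin p) (Fin p ⊕ Fin p) ℝ)) ^ 2 =
      (a + d) • (Mp - ((1 + γ) * η) • (1 : Matrix (Fin p ⊕ Fin p) (Fin p ⊕ Fin p) ℝ)) := by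
    rw [hA, pow_two, Matrix.fromBlocks_multiply, Matrix.fromBlocks_smul]
    have hmul : ∀ x y : ℝ, (x • (1 : Matrix (Fin p) (Fin p) ℝ)) * (y • 1) = (x * y) • 1 := by
      intro x y
      rw [Matrix.smul_mul, Matrix.mul_smul, Matrix.one_mul, smul_smul]
    rw [hmul, hmul, hmul, hmul, hmul, hmul, hmul, hmul]
    have e1 : a * a + b * c = (a + d) * a := by linear_combination hadbc - hs2 / 50
    have e2 : a * b + b * d = (a + d) * b := by ring
    have e3 : c * a + d * c = (a + d) * c := by ring
    have e4 : c * b + d * d = (a + d) * d := by linear_combination hadbc - hs2 / 50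
    simp only [← add_smul, smul_smul]
    rw [e1, e2, e3, e4]
  have hr2 : ((Mp - ((1 + γ) * η) • (1 : Matrix (Fin p ⊕ Fin p) (Fin p ⊕ Fin p) ℝ)) ^ 2).rank
      = p := by
    rw [hsq, rank_smul_ne_zero htne]; exact hr1
  refine ⟨hr1, hr2, ?_⟩
  -- third part
  have hC : (1 / (1 + γ)) • Mp - η • (1 : Matrix (Fin p ⊕ Fin p) (Fin p ⊕ Fin p) ℝ) =
      (1 / (1 + γ)) • (Mp - ((1 + γ) * η) • (1 : Matrix (Fin p ⊕ Fin p) (Fin p ⊕ Fin p) ℝ)) := by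
    rw [smul_sub, smul_smul]
    congr 2
    field_simp
  have hne : (1 / (1 + γ) : ℝ) ≠ 0 := by positivity
  rw [hC, rank_smul_ne_zero hne, smul_pow, rank_smul_ne_zero (pow_ne_zero 2 hne), hr1, hr2]
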